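/- arXiv:1702.04947 — 7 statements merged into one kernel-verified Lean document; each statement's English description precedes it below -/
import Mathlib

section
/- Let (u,d) and (v,h) both satisfy the vertex-continuity conditions. Then ⟨A_𝔞(u,d),(v,h)⟩ = −Σ_{j=1}^m ∫₀¹ c_j(x) u_j′(x) v_j′(x) dx + Σ_{α=1}^n b_α d_α h_α; that is, the operator A_𝔞 is associated with (the negative of) the sesquilinear form 𝔞((u,d),(v,h)) = Σ_{j=1}^m ∫₀¹ c_j u_j′ v_j′ dx − Σ_{α=1}^n b_α d_α h_α. -/
open MeasureTheory Set

/-- If `(u,d)` and `(v,h)` satisfy the vertex-continuity conditions on a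
finite network (edges `j : Fin m` identified with `[0,1]`, initial vertex `e₀ j`, terminal
vertex `e₁ j`), then `⟨A_𝔞(u,d),(v,h)⟩ = -∑_j ∫₀¹ c_j u_j' v_j' + ∑_α b_α d_α h_α`,
i.e. `A_𝔞` is associated with (the negative of) the form `𝔞`.  Here
`A_𝔞 (u,d) = ( ((c_j u_j')')_j , C u + B d )` with the Kirchhoff feedback operator
`(C u)_α = ∑_j (φ⁺_{αj} c_j(0) u_j'(0) - φ⁻_{αj} c_j(1) u_j'(1))`, `B = diag b`, and the inner
product `⟨(u,d),(v,h)⟩ = ∑_j ∫₀¹ u_j v_j + ∑_α d_α h_α`. -/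
theorem statement0
    (m n : ℕ) (e₀ e₁ : Fin m → Fin n)
    (c c' : Fin m → ℝ → ℝ)
    (u u' w' v v' : Fin m → ℝ → ℝ)
    (b d h : Fin n → ℝ)
    -- `c_j ∈ C¹([0,1])`
    (hc : ∀ j, ∀ x ∈ Icc (0:ℝ) 1, HasDerivAt (c j) (c' j x) x)
    (hc' : ∀ j, ContinuousOn (c' j) (Icc (0:ℝ) 1))
    -- `u_j ∈ C²([0,1])`: `u_j' = u' j` and `(c_j u_j')' = w' j`, all continuous on `[0,1]`
    (hu : ∀ j, ∀ x ∈ Icc (0:ℝ) 1, HasDerivAt (u j) (u' j x) x)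
    (hu' : ∀ j, ContinuousOn (u' j) (Icc (0:ℝ) 1))
    (hw : ∀ j, ∀ x ∈ Icc (0:ℝ) 1, HasDerivAt (fun y => c j y * u' j y) (w' j x) x)
    (hw' : ∀ j, ContinuousOn (w' j) (Icc (0:ℝ) 1))
    -- `v_j ∈ C²([0,1])` (only the first derivative is needed)
    (hv : ∀ j, ∀ x ∈ Icc (0:ℝ) 1, HasDerivAt (v j) (v' j x) x)
    (hv' : ∀ j, ContinuousOn (v' j) (Icc (0:ℝ) 1))
    -- vertex-continuity conditions for `(u,d)` and `(v,h)`
    (hud0 : ∀ j, u j 0 = d (e₀ j)) (hud1 : ∀ j, u j 1 = d (e₁ j))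
    (hvh0 : ∀ j, v j 0 = h (e₀ j)) (hvh1 : ∀ j, v j 1 = h (e₁ j)) :
    (∑ j, ∫ x in (0:ℝ)..1, w' j x * v j x)
      + ∑ α, ((∑ j, ((if e₀ j = α then (1:ℝ) else 0) * (c j 0 * u' j 0)
            - (if e₁ j = α then (1:ℝ) else 0) * (c j 1 * u' j 1))) + b α * d α) * h α
      = -(∑ j, ∫ x in (0:ℝ)..1, c j x * u' j x * v' j x) + ∑ α, b α * d α * h α := by
  have h01 : uIcc (0:ℝ) 1 = Icc 0 1 := uIcc_of_le zero_le_one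
  have key : ∀ j, (∫ x in (0:ℝ)..1, w' j x * v j x)
      = (c j 1 * u' j 1 * v j 1 - c j 0 * u' j 0 * v j 0)
        - ∫ x in (0:ℝ)..1, c j x * u' j x * v' j x := by
    intro j
    have hvc : ContinuousOn (v j) (Icc (0:ℝ) 1) :=
      fun x hx => (hv j x hx).continuousAt.continuousWithinAt
    have hcc : ContinuousOn (c j) (Icc (0:ℝ) 1) :=
      fun x hx => (hc j x hx).continuousAt.continuousWithinAt
    have hi1 : IntervalIntegrable (fun x => w' j x * v j x) volume 0 1 := by
      apply ContinuousOn.intervalIntegrable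
      rw [h01]; exact (hw' j).mul hvc
    have hi2 : IntervalIntegrable (fun x => c j x * u' j x * v' j x) volume 0 1 := by
      apply ContinuousOn.intervalIntegrable
      rw [h01]; exact ((hcc.mul (hu' j)).mul (hv' j))
    have ibp := intervalIntegral.integral_deriv_mul_eq_sub
      (u := fun y => c j y * u' j y) (v := v j) (u' := w' j) (v' := v' j)
      (fun x hx => hw j x (h01 ▸ hx)) (fun x hx => hv j x (h01 ▸ hx))
      (by apply ContinuousOn.intervalIntegrable; rw [h01]; exact hw' j)
      (by apply ContinuousOn.intervalIntegrable; rw [h01]; exact hv' j)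
    rw [intervalIntegral.integral_add hi1 hi2] at ibp
    linarith
  have hvert : (∑ α, ((∑ j, ((if e₀ j = α then (1:ℝ) else 0) * (c j 0 * u' j 0)
            - (if e₁ j = α then (1:ℝ) else 0) * (c j 1 * u' j 1))) + b α * d α) * h α)
      = (∑ j, (c j 0 * u' j 0 * v j 0 - c j 1 * u' j 1 * v j 1))
        + ∑ α, b α * d α * h α := by
    simp_rw [add_mul, Finset.sum_add_distrib, Finset.sum_mul, sub_mul]
    congr 1
    rw [Finset.sum_comm]
    refine Finset.sum_congr rfl fun j _ => ?_
    rw [Finset.sum_sub_distrib]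
    simp [hvh0, hvh1, mul_assoc]
  rw [hvert]
  simp only [key]
  rw [Finset.sum_sub_distrib, Finset.sum_sub_distrib, Finset.sum_sub_distrib]
  ring
end

section
/- Let (u,d) and (v,h) both satisfy the vertex-continuity conditions. Then the operator A_𝔞 is symmetric on such pairs: ⟨A_𝔞(u,d),(v,h)⟩ = ⟨(u,d),A_𝔞(v,h)⟩. -/
open MeasureTheory Set

/-- If `(u,d)` and `(v,h)` both satisfy the vertex-continuity conditions,
then `A_𝔞` is symmetric on such pairs: `⟨A_𝔞(u,d),(v,h)⟩ = ⟨(u,d),A_𝔞(v,h)⟩`, where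
`A_𝔞 (u,d) = ( ((c_j u_j')')_j , C u + B d )`,
`(C u)_α = ∑_j (φ⁺_{αj} c_j(0) u_j'(0) - φ⁻_{αj} c_j(1) u_j'(1))`, `B = diag b`, and
`⟨(u,d),(v,h)⟩ = ∑_j ∫₀¹ u_j v_j + ∑_α d_α h_α`. -/
theorem statement1
    (m n : ℕ) (e₀ e₁ : Fin m → Fin n)
    (c c' : Fin m → ℝ → ℝ)
    (u u' wu' v v' wv' : Fin m → ℝ → ℝ)
    (b d h : Fin n → ℝ)
    -- `c_j ∈ C¹([0,1])`
    (hc : ∀ j, ∀ x ∈ Icc (0:ℝ) 1, HasDerivAt (c j) (c' j x) x)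
    (hc' : ∀ j, ContinuousOn (c' j) (Icc (0:ℝ) 1))
    -- `u_j ∈ C²([0,1])`: `u_j' = u' j` and `(c_j u_j')' = wu' j`, all continuous on `[0,1]`
    (hu : ∀ j, ∀ x ∈ Icc (0:ℝ) 1, HasDerivAt (u j) (u' j x) x)
    (hu' : ∀ j, ContinuousOn (u' j) (Icc (0:ℝ) 1))
    (hwu : ∀ j, ∀ x ∈ Icc (0:ℝ) 1, HasDerivAt (fun y => c j y * u' j y) (wu' j x) x)
    (hwu' : ∀ j, ContinuousOn (wu' j) (Icc (0:ℝ) 1))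
    -- `v_j ∈ C²([0,1])`: `v_j' = v' j` and `(c_j v_j')' = wv' j`, all continuous on `[0,1]`
    (hv : ∀ j, ∀ x ∈ Icc (0:ℝ) 1, HasDerivAt (v j) (v' j x) x)
    (hv' : ∀ j, ContinuousOn (v' j) (Icc (0:ℝ) 1))
    (hwv : ∀ j, ∀ x ∈ Icc (0:ℝ) 1, HasDerivAt (fun y => c j y * v' j y) (wv' j x) x)
    (hwv' : ∀ j, ContinuousOn (wv' j) (Icc (0:ℝ) 1))
    -- vertex-continuity conditions for `(u,d)` and `(v,h)`
    (hud0 : ∀ j, u j 0 = d (e₀ j)) (hud1 : ∀ j, u j 1 = d (e₁ j))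
    (hvh0 : ∀ j, v j 0 = h (e₀ j)) (hvh1 : ∀ j, v j 1 = h (e₁ j)) :
    (∑ j, ∫ x in (0:ℝ)..1, wu' j x * v j x)
      + ∑ α, ((∑ j, ((if e₀ j = α then (1:ℝ) else 0) * (c j 0 * u' j 0)
            - (if e₁ j = α then (1:ℝ) else 0) * (c j 1 * u' j 1))) + b α * d α) * h α
      = (∑ j, ∫ x in (0:ℝ)..1, u j x * wv' j x)
      + ∑ α, d α * ((∑ j, ((if e₀ j = α then (1:ℝ) else 0) * (c j 0 * v' j 0)
            - (if e₁ j = α then (1:ℝ) else 0) * (c j 1 * v' j 1))) + b α * h α) := by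
  have h01 : Set.uIcc (0:ℝ) 1 = Icc 0 1 := uIcc_of_le zero_le_one
  -- continuity of everything
  have hcv : ∀ j : Fin m, ContinuousOn (v j) (Icc (0:ℝ) 1) :=
    fun j x hx => (hv j x hx).continuousAt.continuousWithinAt
  have hcu : ∀ j : Fin m, ContinuousOn (u j) (Icc (0:ℝ) 1) :=
    fun j x hx => (hu j x hx).continuousAt.continuousWithinAt
  have hccu' : ∀ j : Fin m, ContinuousOn (fun y => c j y * u' j y) (Icc (0:ℝ) 1) :=
    fun j x hx => (hwu j x hx).continuousAt.continuousWithinAt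
  have hccv' : ∀ j : Fin m, ContinuousOn (fun y => c j y * v' j y) (Icc (0:ℝ) 1) :=
    fun j x hx => (hwv j x hx).continuousAt.continuousWithinAt
  have intg : ∀ {f : ℝ → ℝ}, ContinuousOn f (Icc (0:ℝ) 1) →
      IntervalIntegrable f MeasureTheory.volume 0 1 :=
    fun {f} hf => ContinuousOn.intervalIntegrable (by rw [h01]; exact hf)
  -- integration by parts, u side
  have keyU : ∀ j : Fin m,
      (∫ x in (0:ℝ)..1, wu' j x * v j x)
        = (c j 1 * u' j 1 * v j 1 - c j 0 * u' j 0 * v j 0)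
          - ∫ x in (0:ℝ)..1, (c j x * u' j x) * v' j x := by
    intro j
    have ibp := intervalIntegral.integral_deriv_mul_eq_sub
      (u := fun y => c j y * u' j y) (v := v j) (u' := wu' j) (v' := v' j)
      (by rw [h01]; exact hwu j) (by rw [h01]; exact hv j)
      (intg (hwu' j)) (intg (hv' j))
    beta_reduce at ibp
    have hadd : (∫ x in (0:ℝ)..1, wu' j x * v j x + (c j x * u' j x) * v' j x)
        = (∫ x in (0:ℝ)..1, wu' j x * v j x)
          + ∫ x in (0:ℝ)..1, (c j x * u' j x) * v' j x :=
      intervalIntegral.integral_add (intg ((hwu' j).mul (hcv j)))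
        (intg ((hccu' j).mul (hv' j)))
    rw [hadd] at ibp
    linarith [ibp]
  -- integration by parts, v side
  have keyV : ∀ j : Fin m,
      (∫ x in (0:ℝ)..1, u j x * wv' j x)
        = (u j 1 * (c j 1 * v' j 1) - u j 0 * (c j 0 * v' j 0))
          - ∫ x in (0:ℝ)..1, u' j x * (c j x * v' j x) := by
    intro j
    have ibp := intervalIntegral.integral_deriv_mul_eq_sub
      (u := u j) (v := fun y => c j y * v' j y) (u' := u' j) (v' := wv' j)
      (by rw [h01]; exact hu j) (by rw [h01]; exact hwv j)
      (intg (hu' j)) (intg (hwv' j))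
    beta_reduce at ibp
    have hadd : (∫ x in (0:ℝ)..1, u' j x * (c j x * v' j x) + u j x * wv' j x)
        = (∫ x in (0:ℝ)..1, u' j x * (c j x * v' j x))
          + ∫ x in (0:ℝ)..1, u j x * wv' j x :=
      intervalIntegral.integral_add (intg ((hu' j).mul (hccv' j)))
        (intg ((hcu j).mul (hwv' j)))
    rw [hadd] at ibp
    linarith [ibp]
  -- the two middle integrals agree
  have hmid : ∀ j : Fin m,
      (∫ x in (0:ℝ)..1, (c j x * u' j x) * v' j x)
        = ∫ x in (0:ℝ)..1, u' j x * (c j x * v' j x) := by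
    intro j
    apply intervalIntegral.integral_congr
    intro x _
    ring
  -- boundary sums
  have bdy : ∀ (e : Fin m → Fin n) (P : Fin m → ℝ) (w : Fin n → ℝ),
      (∑ α, (∑ j, (if e j = α then (1:ℝ) else 0) * P j) * w α)
        = ∑ j, P j * w (e j) := by
    intro e P w
    simp only [Finset.sum_mul, ite_mul, one_mul, zero_mul]
    rw [Finset.sum_comm]
    simp [Finset.sum_ite_eq]
  -- expand the α-sums on both sides
  have expandL :
      (∑ α, ((∑ j, ((if e₀ j = α then (1:ℝ) else 0) * (c j 0 * u' j 0)
            - (if e₁ j = α then (1:ℝ) else 0) * (c j 1 * u' j 1))) + b α * d α) * h α)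
        = (∑ j, (c j 0 * u' j 0) * v j 0) - (∑ j, (c j 1 * u' j 1) * v j 1)
          + ∑ α, b α * d α * h α := by
    have step : ∀ α, ((∑ j, ((if e₀ j = α then (1:ℝ) else 0) * (c j 0 * u' j 0)
            - (if e₁ j = α then (1:ℝ) else 0) * (c j 1 * u' j 1))) + b α * d α) * h α
        = (∑ j, (if e₀ j = α then (1:ℝ) else 0) * (c j 0 * u' j 0)) * h α
          - (∑ j, (if e₁ j = α then (1:ℝ) else 0) * (c j 1 * u' j 1)) * h α
          + b α * d α * h α := by
      intro α; rw [Finset.sum_sub_distrib]; ring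
    rw [Finset.sum_congr rfl fun α _ => step α]
    simp only [Finset.sum_add_distrib, Finset.sum_sub_distrib]
    rw [bdy e₀ (fun j => c j 0 * u' j 0) h, bdy e₁ (fun j => c j 1 * u' j 1) h]
    simp only [← hvh0, ← hvh1]
  have expandR :
      (∑ α, d α * ((∑ j, ((if e₀ j = α then (1:ℝ) else 0) * (c j 0 * v' j 0)
            - (if e₁ j = α then (1:ℝ) else 0) * (c j 1 * v' j 1))) + b α * h α))
        = (∑ j, u j 0 * (c j 0 * v' j 0)) - (∑ j, u j 1 * (c j 1 * v' j 1))
          + ∑ α, b α * d α * h α := by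
    have step : ∀ α, d α * ((∑ j, ((if e₀ j = α then (1:ℝ) else 0) * (c j 0 * v' j 0)
            - (if e₁ j = α then (1:ℝ) else 0) * (c j 1 * v' j 1))) + b α * h α)
        = (∑ j, (if e₀ j = α then (1:ℝ) else 0) * (c j 0 * v' j 0)) * d α
          - (∑ j, (if e₁ j = α then (1:ℝ) else 0) * (c j 1 * v' j 1)) * d α
          + b α * d α * h α := by
      intro α; rw [Finset.sum_sub_distrib]; ring
    rw [Finset.sum_congr rfl fun α _ => step α]
    simp only [Finset.sum_add_distrib, Finset.sum_sub_distrib]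
    rw [bdy e₀ (fun j => c j 0 * v' j 0) d, bdy e₁ (fun j => c j 1 * v' j 1) d]
    simp only [← hud0, ← hud1]
    congr 1
    congr 1 <;> exact Finset.sum_congr rfl fun j _ => mul_comm _ _
  -- put everything together
  simp only [keyU, keyV]
  rw [expandL, expandR]
  have hI : (∑ j, ∫ x in (0:ℝ)..1, (c j x * u' j x) * v' j x)
      = ∑ j, ∫ x in (0:ℝ)..1, u' j x * (c j x * v' j x) :=
    Finset.sum_congr rfl fun j _ => hmid j
  simp only [Finset.sum_sub_distrib]
  linarith [hI]
end

section
/- Assume in addition that c_j(x) ≥ 0 for all x ∈ [0,1] and all j = 1,…,m, and that b_α ≤ 0 for all α = 1,…,n. Then A_𝔞 is dissipative on pairs satisfying the vertex-continuity conditions: ⟨A_𝔞(u,d),(u,d)⟩ = −Σ_{j=1}^m ∫₀¹ c_j(x) (u_j′(x))² dx + Σ_{α=1}^n b_α d_α² ≤ 0. -/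
open MeasureTheory Set

/-- If moreover `c_j ≥ 0` on `[0,1]` and `b_α ≤ 0`, then `A_𝔞` is
dissipative on pairs satisfying the vertex-continuity conditions:
`⟨A_𝔞(u,d),(u,d)⟩ = -∑_j ∫₀¹ c_j (u_j')² + ∑_α b_α d_α² ≤ 0`. -/
theorem statement2
    (m n : ℕ) (e₀ e₁ : Fin m → Fin n)
    (c c' : Fin m → ℝ → ℝ)
    (u u' w' : Fin m → ℝ → ℝ)
    (b d : Fin n → ℝ)
    -- `c_j ∈ C¹([0,1])`, `c_j ≥ 0` on `[0,1]`, and `b_α ≤ 0`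
    (hc : ∀ j, ∀ x ∈ Icc (0:ℝ) 1, HasDerivAt (c j) (c' j x) x)
    (hc' : ∀ j, ContinuousOn (c' j) (Icc (0:ℝ) 1))
    (hcpos : ∀ j, ∀ x ∈ Icc (0:ℝ) 1, 0 ≤ c j x)
    (hb : ∀ α, b α ≤ 0)
    -- `u_j ∈ C²([0,1])`: `u_j' = u' j` and `(c_j u_j')' = w' j`, all continuous on `[0,1]`
    (hu : ∀ j, ∀ x ∈ Icc (0:ℝ) 1, HasDerivAt (u j) (u' j x) x)
    (hu' : ∀ j, ContinuousOn (u' j) (Icc (0:ℝ) 1))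
    (hw : ∀ j, ∀ x ∈ Icc (0:ℝ) 1, HasDerivAt (fun y => c j y * u' j y) (w' j x) x)
    (hw' : ∀ j, ContinuousOn (w' j) (Icc (0:ℝ) 1))
    -- vertex-continuity conditions for `(u,d)`
    (hud0 : ∀ j, u j 0 = d (e₀ j)) (hud1 : ∀ j, u j 1 = d (e₁ j)) :
    (∑ j, ∫ x in (0:ℝ)..1, w' j x * u j x)
      + ∑ α, ((∑ j, ((if e₀ j = α then (1:ℝ) else 0) * (c j 0 * u' j 0)
            - (if e₁ j = α then (1:ℝ) else 0) * (c j 1 * u' j 1))) + b α * d α) * d α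
      = -(∑ j, ∫ x in (0:ℝ)..1, c j x * (u' j x) ^ 2) + ∑ α, b α * d α ^ 2
    ∧ -(∑ j, ∫ x in (0:ℝ)..1, c j x * (u' j x) ^ 2) + ∑ α, b α * d α ^ 2 ≤ 0 := by
  have h01 : uIcc (0:ℝ) 1 = Icc 0 1 := uIcc_of_le zero_le_one
  -- integration by parts on each edge
  have key : ∀ j, (∫ x in (0:ℝ)..1, w' j x * u j x)
      = c j 1 * u' j 1 * u j 1 - c j 0 * u' j 0 * u j 0
        - ∫ x in (0:ℝ)..1, c j x * (u' j x) ^ 2 := by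
    intro j
    have hcu : ContinuousOn (u j) (Icc (0:ℝ) 1) :=
      fun x hx => ((hu j x hx).continuousAt).continuousWithinAt
    have hcc : ContinuousOn (c j) (Icc (0:ℝ) 1) :=
      fun x hx => ((hc j x hx).continuousAt).continuousWithinAt
    have hint1 : IntervalIntegrable (fun x => w' j x * u j x) volume 0 1 := by
      apply ContinuousOn.intervalIntegrable
      rw [h01]; exact (hw' j).mul hcu
    have hint2 : IntervalIntegrable (fun x => c j x * u' j x * u' j x) volume 0 1 := by
      apply ContinuousOn.intervalIntegrable
      rw [h01]; exact (hcc.mul (hu' j)).mul (hu' j)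
    have hparts : (∫ x in (0:ℝ)..1, w' j x * u j x + (c j x * u' j x) * u' j x)
        = (c (j) 1 * u' j 1) * u j 1 - (c j 0 * u' j 0) * u j 0 := by
      apply intervalIntegral.integral_deriv_mul_eq_sub
      · intro x hx; exact hw j x (h01 ▸ hx)
      · intro x hx; exact hu j x (h01 ▸ hx)
      · apply ContinuousOn.intervalIntegrable; rw [h01]; exact hw' j
      · apply ContinuousOn.intervalIntegrable; rw [h01]; exact hu' j
    rw [intervalIntegral.integral_add hint1 hint2] at hparts
    have hsq : (∫ x in (0:ℝ)..1, c j x * u' j x * u' j x)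
        = ∫ x in (0:ℝ)..1, c j x * (u' j x) ^ 2 := by
      refine intervalIntegral.integral_congr fun x _ => ?_
      ring
    rw [hsq] at hparts
    linarith [hparts]
  -- rewrite the vertex sum
  have hS : ∑ α, ((∑ j, ((if e₀ j = α then (1:ℝ) else 0) * (c j 0 * u' j 0)
            - (if e₁ j = α then (1:ℝ) else 0) * (c j 1 * u' j 1))) + b α * d α) * d α
      = (∑ j, (c j 0 * u' j 0 * d (e₀ j) - c j 1 * u' j 1 * d (e₁ j)))
        + ∑ α, b α * d α ^ 2 := by
    simp only [add_mul, Finset.sum_add_distrib, Finset.sum_mul, sub_mul]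
    congr 1
    · rw [Finset.sum_comm]
      refine Finset.sum_congr rfl fun j _ => ?_
      rw [Finset.sum_sub_distrib]
      congr 1
      · simp [ite_mul, Finset.sum_ite_eq]
      · simp [ite_mul, Finset.sum_ite_eq]
    · exact Finset.sum_congr rfl fun α _ => by ring
  constructor
  · rw [hS]
    have h1 : (∑ j, ∫ x in (0:ℝ)..1, w' j x * u j x)
        = ∑ j, ((c j 1 * u' j 1 * d (e₁ j) - c j 0 * u' j 0 * d (e₀ j))
            - ∫ x in (0:ℝ)..1, c j x * (u' j x) ^ 2) := by
      refine Finset.sum_congr rfl fun j _ => ?_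
      rw [key j, hud0 j, hud1 j]
    rw [h1]
    simp only [Finset.sum_sub_distrib]
    ring
  · have hI : (0:ℝ) ≤ ∑ j, ∫ x in (0:ℝ)..1, c j x * (u' j x) ^ 2 := by
      refine Finset.sum_nonneg fun j _ => ?_
      refine intervalIntegral.integral_nonneg zero_le_one fun x hx => ?_
      exact mul_nonneg (hcpos j x hx) (sq_nonneg _)
    have hBd : (∑ α, b α * d α ^ 2) ≤ 0 :=
      Finset.sum_nonpos fun α _ => mul_nonpos_of_nonpos_of_nonneg (hb α) (sq_nonneg _)
    linarith
end

section
/- For every d ∈ ℝⁿ and every square-integrable η : [−r,0] → ℝⁿ, the map t ↦ T_t d + T₀(t)η is continuous from [0,∞) into L²([−r,0];ℝⁿ); in particular, as t → 0⁺ one has ‖T_t d + T₀(t)η − η‖_{L²([−r,0];ℝⁿ)} → 0 (at t = 0 the value of the map, as an L² class, is η). -/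
open MeasureTheory Set Filter Topology

/-- `e^{sB}` as an operator on Euclidean space `ℝⁿ`, for `B = diag b`. -/
noncomputable def expB {n : ℕ} (b : Fin n → ℝ) (s : ℝ) :
    EuclideanSpace ℝ (Fin n) →L[ℝ] EuclideanSpace ℝ (Fin n) :=
  Matrix.toEuclideanCLM (𝕜 := ℝ) (NormedSpace.exp (s • Matrix.diagonal b))

/-- The nilpotent left-shift operator: `(T₀(t)η)(θ) = η(t+θ)` if `t+θ ≤ 0`, else `0`. -/
noncomputable def shiftT0 {n : ℕ} (t : ℝ) (η : ℝ → EuclideanSpace ℝ (Fin n)) :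
    ℝ → EuclideanSpace ℝ (Fin n) :=
  fun θ => if t + θ ≤ 0 then η (t + θ) else 0

/-- The boundary-delay flow: `(T_t d)(θ) = e^{(t+θ)B} d` if `-t < θ`, else `0`. -/
noncomputable def delayT {n : ℕ} (b : Fin n → ℝ) (t : ℝ) (d : EuclideanSpace ℝ (Fin n)) :
    ℝ → EuclideanSpace ℝ (Fin n) :=
  fun θ => if -t < θ then expB b (t + θ) d else 0

lemma expB_apply {n : ℕ} (b : Fin n → ℝ) (s : ℝ) (d : EuclideanSpace ℝ (Fin n)) (i : Fin n) :
    expB b s d i = Real.exp (s * b i) * d i := by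
  have h1 : (s • Matrix.diagonal b) = Matrix.diagonal (fun i => s * b i) := by
    rw [← Matrix.diagonal_smul]; rfl
  have hpi : NormedSpace.exp (fun i => s * b i) = fun i : Fin n => Real.exp (s * b i) :=
    funext fun i => (Pi.coe_exp _ i).trans (by rw [← Real.exp_eq_exp_ℝ])
  have h2 : NormedSpace.exp (s • Matrix.diagonal b)
      = Matrix.diagonal (fun i => Real.exp (s * b i)) := by
    rw [h1, Matrix.exp_diagonal, hpi]
  have h3 := Matrix.ofLp_toEuclideanCLM (𝕜 := ℝ)
    (Matrix.diagonal (fun i => Real.exp (s * b i))) d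
  rw [expB, h2]
  have := congrFun h3 i
  simpa [Matrix.mulVec_diagonal] using this

lemma continuous_expB {n : ℕ} (b : Fin n → ℝ) (d : EuclideanSpace ℝ (Fin n)) :
    Continuous fun s : ℝ => expB b s d := by
  have hfun : (fun s : ℝ => expB b s d)
      = fun s => (WithLp.equiv 2 (Fin n → ℝ)).symm (fun i => Real.exp (s * b i) * d i) := by
    funext s
    ext i
    rw [expB_apply]
    rfl
  rw [hfun]
  exact (PiLp.continuous_toLp (p := 2) (β := fun _ : Fin n => ℝ)).comp <| continuous_pi fun i =>
    ((Real.continuous_exp.comp (continuous_id.mul continuous_const)).mul continuous_const)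

lemma int_sq_aux {α : Type*} [MeasurableSpace α] {μ : Measure α}
    {E : Type*} [NormedAddCommGroup E] {f : α → E} (hf : MemLp f 2 μ) :
    eLpNorm f 2 μ = ENNReal.ofReal ((∫ a, ‖f a‖ ^ 2 ∂μ) ^ (2⁻¹ : ℝ)) := by
  rw [hf.eLpNorm_eq_integral_rpow_norm two_ne_zero ENNReal.ofNat_ne_top]
  norm_num [Real.rpow_natCast]

lemma int_sq_eq {α : Type*} [MeasurableSpace α] {μ : Measure α}
    {E : Type*} [NormedAddCommGroup E] {f : α → E} (hf : MemLp f 2 μ) :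
    ∫ a, ‖f a‖ ^ 2 ∂μ = ((eLpNorm f 2 μ).toReal) ^ 2 := by
  have h0 : 0 ≤ ∫ a, ‖f a‖ ^ 2 ∂μ := integral_nonneg fun a => by positivity
  rw [int_sq_aux hf, ENNReal.toReal_ofReal (Real.rpow_nonneg h0 _),
    ← Real.rpow_natCast (_ ^ (2⁻¹:ℝ)) 2, ← Real.rpow_mul h0]
  norm_num

lemma statement4_aux
    (r : ℝ) (hr : 0 < r) (n : ℕ) (b : Fin n → ℝ)
    (d : EuclideanSpace ℝ (Fin n)) (η : ℝ → EuclideanSpace ℝ (Fin n))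
    (hη : Measurable η)
    (hη2 : IntegrableOn (fun θ => ‖η θ‖ ^ 2) (Icc (-r) 0))
    (t₀ : ℝ) (ht₀ : 0 ≤ t₀) :
    Tendsto (fun t => ∫ θ in Icc (-r) 0,
        ‖(delayT b t d θ + shiftT0 t η θ) - (delayT b t₀ d θ + shiftT0 t₀ η θ)‖ ^ 2)
      (nhdsWithin t₀ (Ici 0)) (nhds 0) := by
  set μI : Measure ℝ := volume.restrict (Icc (-r) 0) with hμI
  haveI : IsFiniteMeasure μI := ⟨by
    rw [hμI, Measure.restrict_apply_univ]; exact measure_Icc_lt_top⟩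
  set l := nhdsWithin t₀ (Ici (0:ℝ)) with hl
  have hmemt : ∀ᶠ t in l, t ∈ Ici (0:ℝ) := eventually_mem_nhdsWithin
  have hce : Continuous fun s : ℝ => expB b s d := continuous_expB b d
  -- strong measurability of delayT
  have hsmA : ∀ t : ℝ, StronglyMeasurable (delayT b t d) := by
    intro t
    have hind : delayT b t d = (Ioi (-t)).indicator (fun θ => expB b (t + θ) d) := by
      funext θ; simp [delayT, Set.indicator, mem_Ioi]
    rw [hind]
    exact ((hce.comp (continuous_const.add continuous_id)).stronglyMeasurable).indicator
      measurableSet_Ioi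
  -- MemLp for delayT
  have hmemA : ∀ t : ℝ, MemLp (delayT b t d) 2 μI := by
    intro t
    obtain ⟨C, hC⟩ := (isCompact_Icc (a := (0:ℝ)) (b := max t 0)).exists_bound_of_continuousOn
      hce.continuousOn
    refine MemLp.of_bound (hsmA t).aestronglyMeasurable (max C 0) ?_
    filter_upwards [ae_restrict_mem measurableSet_Icc] with θ hθ
    by_cases hcase : -t < θ
    · have hmem' : t + θ ∈ Icc (0:ℝ) (max t 0) :=
        ⟨by linarith, le_max_of_le_left (by linarith [hθ.2])⟩
      simp only [delayT, if_pos hcase]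
      exact le_max_of_le_left (hC _ hmem')
    · simp [delayT, if_neg hcase]
  -- measurability of shiftT0
  have hsmS : ∀ t : ℝ, AEStronglyMeasurable (shiftT0 t η) μI := by
    intro t
    have hm : Measurable (shiftT0 t η) := by
      unfold shiftT0
      exact Measurable.ite
        (measurableSet_le (measurable_const.add measurable_id) measurable_const)
        (hη.comp (measurable_const.add measurable_id)) measurable_const
    exact hm.aestronglyMeasurable
  -- the indicator extension of η
  set Y : ℝ → EuclideanSpace ℝ (Fin n) := (Icc (-r) 0).indicator η with hY
  have hYm : StronglyMeasurable Y := (hη.stronglyMeasurable).indicator measurableSet_Icc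
  have hmemI : MemLp η 2 μI := (memLp_two_iff_integrable_sq_norm hη.aestronglyMeasurable).mpr hη2
  have hYmem : MemLp Y 2 (volume : Measure ℝ) := by
    refine ⟨hYm.aestronglyMeasurable, ?_⟩
    rw [hY, eLpNorm_indicator_eq_eLpNorm_restrict measurableSet_Icc]
    exact hmemI.2
  -- translation, as composition with a measure-preserving map
  set g : ℝ → C(ℝ, ℝ) := fun t => ⟨fun θ => θ + t, by continuity⟩ with hg
  have hgc : Continuous g :=
    ContinuousMap.continuous_of_continuous_uncurry _ (continuous_snd.add continuous_fst)
  have mp : ∀ t : ℝ, MeasurePreserving (g t) volume volume := fun t =>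
    measurePreserving_add_right volume t
  set h : ℝ → Lp (EuclideanSpace ℝ (Fin n)) 2 (volume : Measure ℝ) :=
    fun t => Lp.compMeasurePreserving (g t) (mp t) (hYmem.toLp Y) with hh
  have hhc : Continuous h :=
    Continuous.compMeasurePreservingLp continuous_const hgc mp (by norm_num)
  have hcoe : ∀ t : ℝ, (h t : ℝ → EuclideanSpace ℝ (Fin n)) =ᵐ[volume] fun θ => Y (θ + t) := by
    intro t
    refine (Lp.coeFn_compMeasurePreserving _ (mp t)).trans ?_
    exact (mp t).quasiMeasurePreserving.ae_eq_comp (MemLp.coeFn_toLp hYmem)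
  -- pointwise identification of shiftT0 with translation of Y on the interval
  have hSae : ∀ t : ℝ, 0 ≤ t → shiftT0 t η =ᵐ[μI] fun θ => Y (θ + t) := by
    intro t ht
    filter_upwards [ae_restrict_mem measurableSet_Icc] with θ hθ
    by_cases hc : t + θ ≤ 0
    · have hmem' : θ + t ∈ Icc (-r) 0 := ⟨by linarith [hθ.1], by linarith⟩
      rw [shiftT0]
      simp only [if_pos hc]
      rw [hY, indicator_of_mem hmem', add_comm]
    · have hmem' : θ + t ∉ Icc (-r) 0 := fun hmem'' => hc (by linarith [hmem''.2])
      rw [shiftT0]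
      simp only [if_neg hc]
      rw [hY, indicator_of_notMem hmem']
  have hmemS : ∀ t : ℝ, 0 ≤ t → MemLp (shiftT0 t η) 2 μI := by
    intro t ht
    have h1 : MemLp (fun θ => Y (θ + t)) 2 (volume : Measure ℝ) :=
      (Lp.memLp (h t)).ae_eq (hcoe t)
    exact (h1.mono_measure Measure.restrict_le_self).ae_eq (hSae t ht).symm
  -- uniform bound for delayT on [0, t₀+1]
  obtain ⟨C, hC⟩ := (isCompact_Icc (a := (0:ℝ)) (b := t₀+1)).exists_bound_of_continuousOn
    hce.continuousOn
  have hCb : ∀ t ∈ Icc (0:ℝ) (t₀+1), ∀ θ ∈ Icc (-r) (0:ℝ), ‖delayT b t d θ‖ ≤ max C 0 := by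
    intro t ht θ hθ
    by_cases hcase : -t < θ
    · have hmem' : t + θ ∈ Icc (0:ℝ) (t₀+1) := ⟨by linarith, by linarith [hθ.2, ht.2]⟩
      simp only [delayT, if_pos hcase]
      exact le_max_of_le_left (hC _ hmem')
    · simp [delayT, if_neg hcase]
  -- the delayT part converges in the squared integral sense
  have hXA : Tendsto (fun t => ∫ θ in Icc (-r) 0,
      ‖delayT b t d θ - delayT b t₀ d θ‖ ^ 2) l (𝓝 0) := by
    have hmeas : ∀ t : ℝ,
        AEStronglyMeasurable (fun θ => ‖delayT b t d θ - delayT b t₀ d θ‖ ^ 2) μI := fun t =>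
      (((((hsmA t).measurable.sub (hsmA t₀).measurable)).norm).pow_const 2).aestronglyMeasurable
    have hbd : ∀ᶠ t in l, ∀ᵐ θ ∂μI,
        ‖‖delayT b t d θ - delayT b t₀ d θ‖ ^ 2‖ ≤ (2 * max C 0) ^ 2 := by
      filter_upwards [hmemt, (eventually_lt_nhds (lt_add_one t₀)).filter_mono nhdsWithin_le_nhds]
        with t ht1 ht2
      filter_upwards [ae_restrict_mem measurableSet_Icc] with θ hθ
      have b1 := hCb t ⟨ht1, ht2.le⟩ θ hθ
      have b2 := hCb t₀ ⟨ht₀, by linarith⟩ θ hθ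
      have hdiff : ‖delayT b t d θ - delayT b t₀ d θ‖ ≤ 2 * max C 0 := by
        calc ‖delayT b t d θ - delayT b t₀ d θ‖ ≤ ‖delayT b t d θ‖ + ‖delayT b t₀ d θ‖ :=
              norm_sub_le _ _
          _ ≤ 2 * max C 0 := by linarith
      rw [Real.norm_eq_abs, abs_of_nonneg (by positivity)]
      exact pow_le_pow_left₀ (norm_nonneg _) hdiff 2
    have hlim : ∀ᵐ θ ∂μI,
        Tendsto (fun t => ‖delayT b t d θ - delayT b t₀ d θ‖ ^ 2) l (𝓝 0) := by
      have hae : ∀ᵐ θ ∂μI, θ ≠ -t₀ := by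
        refine ae_restrict_of_ae ?_
        rw [ae_iff]
        have hset : {a : ℝ | ¬ a ≠ -t₀} = {-t₀} := by ext a; simp
        rw [hset]
        exact measure_singleton _
      filter_upwards [hae] with θ hθ
      have hT : Tendsto (fun t => delayT b t d θ) l (𝓝 (delayT b t₀ d θ)) := by
        rcases hθ.lt_or_gt with hlt | hgt
        · -- θ < -t₀ : both sides vanish eventually
          have hev : ∀ᶠ t in l, delayT b t₀ d θ = delayT b t d θ := by
            filter_upwards [(eventually_lt_nhds (by linarith : t₀ < -θ)).filter_mono
              nhdsWithin_le_nhds] with t ht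
            have h1 : ¬ -t < θ := by linarith
            have h2 : ¬ -t₀ < θ := by linarith
            simp [delayT, h1, h2]
          exact tendsto_const_nhds.congr' hev
        · -- -t₀ < θ
          have hev : ∀ᶠ t in l, expB b (t + θ) d = delayT b t d θ := by
            filter_upwards [(eventually_gt_nhds (by linarith : -θ < t₀)).filter_mono
              nhdsWithin_le_nhds] with t ht
            have h1 : -t < θ := by linarith
            simp [delayT, h1]
          have hT0 : Tendsto (fun t => expB b (t + θ) d) l (𝓝 (expB b (t₀ + θ) d)) :=
            ((hce.comp (continuous_id.add continuous_const)).tendsto t₀).mono_left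
              nhdsWithin_le_nhds
          have heq2 : delayT b t₀ d θ = expB b (t₀ + θ) d := by simp [delayT, hgt]
          rw [heq2]
          exact hT0.congr' hev
      have := ((hT.sub (tendsto_const_nhds (x := delayT b t₀ d θ))).norm).pow 2
      simpa using this
    have := tendsto_integral_filter_of_dominated_convergence (μ := μI)
      (f := fun _ => (0:ℝ)) (bound := fun _ => (2 * max C 0) ^ 2)
      (Eventually.of_forall hmeas) hbd (integrable_const _) hlim
    simpa using this
  -- eLpNorm convergence of the delayT part
  have heA : Tendsto (fun t =>
      eLpNorm (fun θ => delayT b t d θ - delayT b t₀ d θ) 2 μI) l (𝓝 0) := by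
    have hcont0 : ContinuousAt (fun x : ℝ => ENNReal.ofReal (x ^ (2⁻¹ : ℝ))) 0 :=
      ENNReal.continuous_ofReal.continuousAt.comp
        (Real.continuousAt_rpow_const 0 2⁻¹ (Or.inr (by norm_num)))
    have h2 := hcont0.tendsto.comp hXA
    rw [show ENNReal.ofReal ((0:ℝ) ^ (2⁻¹ : ℝ)) = 0 by
      rw [Real.zero_rpow (by norm_num)]; simp] at h2
    refine h2.congr' (Eventually.of_forall fun t => ?_)
    exact (int_sq_aux ((hmemA t).sub (hmemA t₀))).symm
  -- eLpNorm convergence of the shift part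
  have heS : Tendsto (fun t =>
      eLpNorm (fun θ => shiftT0 t η θ - shiftT0 t₀ η θ) 2 μI) l (𝓝 0) := by
    have hedist : Tendsto (fun t => edist (h t) (h t₀)) l (𝓝 0) := by
      have h2 : Tendsto (fun t => edist (h t) (h t₀)) (𝓝 t₀) (𝓝 (edist (h t₀) (h t₀))) :=
        (continuous_edist.comp (hhc.prodMk continuous_const)).tendsto t₀
      simpa [edist_self] using h2.mono_left nhdsWithin_le_nhds
    refine tendsto_of_tendsto_of_tendsto_of_le_of_le' tendsto_const_nhds hedist
      (Eventually.of_forall fun t => zero_le) ?_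
    filter_upwards [hmemt] with t ht
    calc eLpNorm (fun θ => shiftT0 t η θ - shiftT0 t₀ η θ) 2 μI
        = eLpNorm (fun θ => Y (θ + t) - Y (θ + t₀)) 2 μI :=
          eLpNorm_congr_ae ((hSae t ht).sub (hSae t₀ ht₀))
      _ ≤ eLpNorm (fun θ => Y (θ + t) - Y (θ + t₀)) 2 (volume : Measure ℝ) :=
          eLpNorm_mono_measure _ Measure.restrict_le_self
      _ = eLpNorm (⇑(h t) - ⇑(h t₀)) 2 (volume : Measure ℝ) :=
          (eLpNorm_congr_ae ((hcoe t).sub (hcoe t₀))).symm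
      _ = edist (h t) (h t₀) := (Lp.edist_def _ _).symm
  -- combine via the triangle inequality
  have hFeq : ∀ t : ℝ, (fun θ => (delayT b t d θ + shiftT0 t η θ)
        - (delayT b t₀ d θ + shiftT0 t₀ η θ))
      = fun θ => (delayT b t d θ - delayT b t₀ d θ) + (shiftT0 t η θ - shiftT0 t₀ η θ) := by
    intro t; funext θ; abel
  have heF : Tendsto (fun t => eLpNorm (fun θ => (delayT b t d θ + shiftT0 t η θ)
      - (delayT b t₀ d θ + shiftT0 t₀ η θ)) 2 μI) l (𝓝 0) := by
    refine tendsto_of_tendsto_of_tendsto_of_le_of_le' tendsto_const_nhds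
      (by simpa using heA.add heS) (Eventually.of_forall fun t => zero_le)
      (Eventually.of_forall fun t => ?_)
    rw [hFeq t]
    exact eLpNorm_add_le
      (((hsmA t).measurable.sub (hsmA t₀).measurable).aestronglyMeasurable)
      ((hsmS t).sub (hsmS t₀)) one_le_two
  have hmemF : ∀ t ∈ Ici (0:ℝ), MemLp (fun θ => (delayT b t d θ + shiftT0 t η θ)
      - (delayT b t₀ d θ + shiftT0 t₀ η θ)) 2 μI := fun t ht =>
    ((hmemA t).add (hmemS t ht)).sub ((hmemA t₀).add (hmemS t₀ ht₀))
  have htoReal : Tendsto (fun t => ((eLpNorm (fun θ => (delayT b t d θ + shiftT0 t η θ)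
      - (delayT b t₀ d θ + shiftT0 t₀ η θ)) 2 μI).toReal) ^ 2) l (𝓝 0) := by
    have h2 := ((ENNReal.tendsto_toReal (by simp)).comp heF).pow 2
    simpa using h2
  refine htoReal.congr' ?_
  filter_upwards [hmemt] with t ht
  exact (int_sq_eq (hmemF t ht)).symm

/-- For every `d ∈ ℝⁿ` and every square-integrable `η : [-r,0] → ℝⁿ`, the
map `t ↦ T_t d + T₀(t)η` is continuous from `[0,∞)` into `L²([-r,0];ℝⁿ)` (continuity being
expressed by the vanishing of the squared `L²` distance); in particular, as `t → 0⁺`,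
`‖T_t d + T₀(t)η - η‖_{L²([-r,0];ℝⁿ)} → 0` (at `t = 0` the value, as an `L²` class, is `η`). -/
theorem statement4
    (r : ℝ) (hr : 0 < r) (n : ℕ) (b : Fin n → ℝ)
    (d : EuclideanSpace ℝ (Fin n)) (η : ℝ → EuclideanSpace ℝ (Fin n))
    (hη : Measurable η)
    (hη2 : IntegrableOn (fun θ => ‖η θ‖ ^ 2) (Icc (-r) 0)) :
    (∀ t₀ ∈ Ici (0:ℝ),
      Tendsto (fun t => ∫ θ in Icc (-r) 0,
          ‖(delayT b t d θ + shiftT0 t η θ) - (delayT b t₀ d θ + shiftT0 t₀ η θ)‖ ^ 2)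
        (nhdsWithin t₀ (Ici 0)) (nhds 0))
    ∧ Tendsto (fun t => ∫ θ in Icc (-r) 0,
          ‖(delayT b t d θ + shiftT0 t η θ) - η θ‖ ^ 2)
        (nhdsWithin 0 (Ioi 0)) (nhds 0) := by
  constructor
  · intro t₀ ht₀
    exact statement4_aux r hr n b d η hη hη2 t₀ ht₀
  · have h0 := (statement4_aux r hr n b d η hη hη2 0 le_rfl).mono_left
      (nhdsWithin_mono 0 Ioi_subset_Ici_self)
    refine h0.congr fun t => ?_
    refine setIntegral_congr_fun measurableSet_Icc fun θ hθ => ?_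
    have h1 : delayT b 0 d θ = 0 := by
      simp [delayT, not_lt.mpr hθ.2]
    have h2 : shiftT0 0 η θ = η θ := by
      simp [shiftT0, hθ.2]
    rw [h1, h2, zero_add]
end

section
/- The solution of the resolvent equation is unique: let λ ∈ ℂ, d ∈ ℂⁿ, and let ζ : [−r,0] → ℂⁿ be Lebesgue integrable. If η : [−r,0] → ℂⁿ is absolutely continuous in the sense that there is an integrable g : [−r,0] → ℂⁿ with η(θ) = d − ∫_θ^0 g(s) ds for all θ ∈ [−r,0], and g(θ) = λ η(θ) − ζ(θ) for almost every θ, then η(θ) = e^{λθ} (d + ∫_θ^0 e^{−λs} ζ(s) ds) for all θ ∈ [−r,0]. -/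
open MeasureTheory Set

set_option maxHeartbeats 1000000

lemma fubini_tri {n : ℕ} {θ : ℝ} (hθ : θ ≤ 0) (v : ℝ → ℂ) (hv : Continuous v)
    (g : ℝ → Fin n → ℂ) (hg : IntegrableOn g (Ioc θ 0)) :
    ∫ s in θ..(0:ℝ), v s • (∫ u in s..(0:ℝ), g u) =
      ∫ u in θ..(0:ℝ), (∫ s in θ..u, v s) • g u := by
  set E : Set (ℝ × ℝ) := {p : ℝ × ℝ | p.1 < p.2 ∧ p.2 ≤ 0} with hE
  have hEmeas : MeasurableSet E :=
    (measurableSet_lt measurable_fst measurable_snd).inter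
      (measurableSet_le measurable_snd measurable_const)
  set μ := volume.restrict (Ioc θ 0) with hμ
  have hvμ : Integrable v μ := hv.integrableOn_Ioc
  have hgμ : Integrable g μ := hg
  have hF : Integrable (fun p : ℝ × ℝ => E.indicator (fun p => v p.1 • g p.2) p) (μ.prod μ) :=
    (hvμ.smul_prod hgμ).indicator hEmeas
  rw [intervalIntegral.integral_of_le hθ, intervalIntegral.integral_of_le hθ]
  calc ∫ s in Ioc θ 0, v s • (∫ u in s..(0:ℝ), g u)
      = ∫ s in Ioc θ 0, ∫ u in Ioc θ 0,
          E.indicator (fun p : ℝ × ℝ => v p.1 • g p.2) (s, u) := by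
        apply setIntegral_congr_fun measurableSet_Ioc
        intro s hs
        have h1 : ∀ u, E.indicator (fun p : ℝ × ℝ => v p.1 • g p.2) (s, u)
            = (Ioc s 0).indicator (fun u => v s • g u) u := by
          intro u
          by_cases h : s < u ∧ u ≤ 0 <;>
            simp [Set.indicator, hE, h, Set.mem_Ioc]
        simp only [h1]
        rw [setIntegral_indicator measurableSet_Ioc,
          Set.inter_eq_self_of_subset_right (Ioc_subset_Ioc hs.1.le le_rfl),
          intervalIntegral.integral_of_le hs.2, integral_smul]
    _ = ∫ u in Ioc θ 0, ∫ s in Ioc θ 0,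
          E.indicator (fun p : ℝ × ℝ => v p.1 • g p.2) (s, u) :=
        integral_integral_swap hF
    _ = ∫ u in Ioc θ 0, (∫ s in θ..u, v s) • g u := by
        apply setIntegral_congr_fun measurableSet_Ioc
        intro u hu
        have h1 : ∀ s, E.indicator (fun p : ℝ × ℝ => v p.1 • g p.2) (s, u)
            = (Iio u).indicator (fun s => v s • g u) s := by
          intro s
          by_cases h : s < u <;>
            simp [Set.indicator, hE, h, hu.2]
        simp only [h1]
        rw [setIntegral_indicator measurableSet_Iio]
        have h2 : Ioc θ 0 ∩ Iio u = Ioo θ u := by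
          ext s
          simp only [Set.mem_inter_iff, Set.mem_Ioc, Set.mem_Iio, Set.mem_Ioo]
          exact ⟨fun h => ⟨h.1.1, h.2⟩, fun h => ⟨⟨h.1, h.2.le.trans hu.2⟩, h.2⟩⟩
        rw [h2, ← integral_Ioc_eq_integral_Ioo,
          ← intervalIntegral.integral_of_le hu.1.le, intervalIntegral.integral_smul_const]

/-- Uniqueness for the resolvent equation: let `λ ∈ ℂ`, `d ∈ ℂⁿ`, and let
`ζ : [-r,0] → ℂⁿ` be Lebesgue integrable.  If `η : [-r,0] → ℂⁿ` is absolutely continuous in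
the sense that there is an integrable `g` with `η(θ) = d - ∫_θ^0 g(s) ds` for all
`θ ∈ [-r,0]`, and `g(θ) = λ η(θ) - ζ(θ)` for almost every `θ`, then
`η(θ) = e^{λθ} (d + ∫_θ^0 e^{-λs} ζ(s) ds)` for all `θ ∈ [-r,0]`. -/
theorem statement6
    (r : ℝ) (hr : 0 < r) (n : ℕ) (lam : ℂ)
    (d : Fin n → ℂ) (ζ g η : ℝ → Fin n → ℂ)
    (hζ : IntegrableOn ζ (Icc (-r) 0))
    (hg : IntegrableOn g (Icc (-r) 0))
    (hη : ∀ θ ∈ Icc (-r) 0, η θ = d - ∫ s in θ..(0:ℝ), g s)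
    (hge : ∀ᵐ θ : ℝ ∂(volume.restrict (Icc (-r) 0)), g θ = lam • η θ - ζ θ) :
    ∀ θ ∈ Icc (-r) 0,
      η θ = Complex.exp (lam * θ) • (d + ∫ s in θ..(0:ℝ), Complex.exp (-lam * s) • ζ s) := by
  intro θ hθmem
  obtain ⟨hθr, hθ0⟩ := hθmem
  -- abbreviations
  have hecont : Continuous fun s : ℝ => Complex.exp (-lam * s) :=
    Complex.continuous_exp.comp (continuous_const.mul Complex.continuous_ofReal)
  have hvcont : Continuous fun s : ℝ => lam * Complex.exp (-lam * s) :=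
    continuous_const.mul hecont
  have hIcc_sub : Icc θ 0 ⊆ Icc (-r) 0 := Icc_subset_Icc hθr le_rfl
  have hIoc_sub : Ioc θ 0 ⊆ Icc (-r) 0 := Ioc_subset_Icc_self.trans hIcc_sub
  have huIcc : uIcc θ (0:ℝ) = Icc θ 0 := uIcc_of_le hθ0
  have hgIcc : IntegrableOn g (Icc θ 0) := hg.mono_set hIcc_sub
  have hgIoc : IntegrableOn g (Ioc θ 0) := hg.mono_set hIoc_sub
  have hgI : IntervalIntegrable g volume θ 0 :=
    (intervalIntegrable_iff_integrableOn_Ioc_of_le hθ0).mpr hgIoc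
  have hζIcc : IntegrableOn ζ (Icc θ 0) := hζ.mono_set hIcc_sub
  -- FTC for lam * exp(-lam s)
  have hd : ∀ x : ℝ, HasDerivAt (fun s : ℝ => -Complex.exp (-lam * s))
      (lam * Complex.exp (-lam * x)) x := by
    intro x
    have h0 : HasDerivAt (fun s : ℝ => -lam * (s : ℂ)) (-lam) x := by
      simpa using (Complex.ofRealCLM.hasDerivAt (x := x)).const_mul (-lam)
    have h1 := h0.cexp
    convert h1.neg using 1
    · rfl
    · rfl
    · ring
  have hFTC : ∀ a b : ℝ, (∫ s in a..b, lam * Complex.exp (-lam * s))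
      = Complex.exp (-lam * a) - Complex.exp (-lam * b) := by
    intro a b
    rw [intervalIntegral.integral_eq_sub_of_hasDerivAt (fun x _ => hd x)
      (hvcont.intervalIntegrable a b)]
    ring
  -- continuity of the primitive and of η'
  have hprim : ContinuousOn (fun s => ∫ u in s..(0:ℝ), g u) (Icc θ 0) := by
    have := intervalIntegral.continuousOn_primitive_interval_left (μ := volume)
      (f := g) (a := θ) (b := (0:ℝ)) (by rw [huIcc]; exact hgIcc)
    rwa [huIcc] at this
  have hη'cont : ContinuousOn (fun s => d - ∫ u in s..(0:ℝ), g u) (Icc θ 0) :=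
    continuousOn_const.sub hprim
  -- integrability facts
  have hInt_eg : IntervalIntegrable (fun s => Complex.exp (-lam * s) • g s) volume θ 0 :=
    (intervalIntegrable_iff_integrableOn_Ioc_of_le hθ0).mpr
      ((hgIcc.continuousOn_smul hecont.continuousOn isCompact_Icc).mono_set Ioc_subset_Icc_self)
  have hInt_eζ : IntervalIntegrable (fun s => Complex.exp (-lam * s) • ζ s) volume θ 0 :=
    (intervalIntegrable_iff_integrableOn_Ioc_of_le hθ0).mpr
      ((hζIcc.continuousOn_smul hecont.continuousOn isCompact_Icc).mono_set Ioc_subset_Icc_self)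
  have hInt_vη' : IntervalIntegrable
      (fun s => (lam * Complex.exp (-lam * s)) • (d - ∫ u in s..(0:ℝ), g u)) volume θ 0 := by
    apply ContinuousOn.intervalIntegrable
    rw [huIcc]
    exact hvcont.continuousOn.smul hη'cont
  have hInt_vprim : IntervalIntegrable
      (fun s => (lam * Complex.exp (-lam * s)) • (∫ u in s..(0:ℝ), g u)) volume θ 0 := by
    apply ContinuousOn.intervalIntegrable
    rw [huIcc]
    exact hvcont.continuousOn.smul hprim
  have hInt_vd : IntervalIntegrable
      (fun s => (lam * Complex.exp (-lam * s)) • d) volume θ 0 :=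
    (hvcont.smul continuous_const).intervalIntegrable θ 0
  -- notation for the main integrals
  set G : Fin n → ℂ := ∫ s in θ..(0:ℝ), g s with hG
  set I : Fin n → ℂ := ∫ s in θ..(0:ℝ), Complex.exp (-lam * s) • g s with hIdef
  set Z : Fin n → ℂ := ∫ s in θ..(0:ℝ), Complex.exp (-lam * s) • ζ s with hZ
  set A : Fin n → ℂ :=
    ∫ s in θ..(0:ℝ), (lam * Complex.exp (-lam * s)) • (d - ∫ u in s..(0:ℝ), g u) with hA
  -- Step (2): I = A - Z
  have hae : ∀ᵐ (s : ℝ) ∂(volume.restrict (Ioc θ 0)),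
      Complex.exp (-lam * s) • g s
        = (lam * Complex.exp (-lam * s)) • (d - ∫ u in s..(0:ℝ), g u)
          - Complex.exp (-lam * s) • ζ s := by
    have h1 := ae_restrict_of_ae_restrict_of_subset hIoc_sub hge
    have h2 := ae_restrict_mem (μ := volume) measurableSet_Ioc (s := Ioc θ 0)
    filter_upwards [h1, h2] with s hs hmem
    have hη's : η s = d - ∫ u in s..(0:ℝ), g u := hη s (hIoc_sub hmem)
    rw [hs, hη's, smul_sub, smul_smul, mul_comm]
  have hI : I = A - Z := by
    rw [hA, hZ, ← intervalIntegral.integral_sub hInt_vη' hInt_eζ, hIdef,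
      intervalIntegral.integral_of_le hθ0, intervalIntegral.integral_of_le hθ0]
    exact integral_congr_ae hae
  -- Step (3): A = (e θ - 1) • d - (e θ • G - I)
  have hAeq : A = (Complex.exp (-lam * θ) - 1) • d - (Complex.exp (-lam * θ) • G - I) := by
    have expand : A = (∫ s in θ..(0:ℝ), (lam * Complex.exp (-lam * s)) • d)
        - ∫ s in θ..(0:ℝ), (lam * Complex.exp (-lam * s)) • (∫ u in s..(0:ℝ), g u) := by
      rw [hA, ← intervalIntegral.integral_sub hInt_vd hInt_vprim]
      simp only [smul_sub]
    have part1 : (∫ s in θ..(0:ℝ), (lam * Complex.exp (-lam * s)) • d)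
        = (Complex.exp (-lam * θ) - 1) • d := by
      rw [intervalIntegral.integral_smul_const, hFTC]
      norm_num
    have part2 : (∫ s in θ..(0:ℝ), (lam * Complex.exp (-lam * s)) • (∫ u in s..(0:ℝ), g u))
        = Complex.exp (-lam * θ) • G - I := by
      rw [fubini_tri hθ0 _ hvcont g hgIoc]
      have h3 : ∀ u : ℝ, (∫ s in θ..u, lam * Complex.exp (-lam * s)) • g u
          = Complex.exp (-lam * θ) • g u - Complex.exp (-lam * u) • g u := by
        intro u
        rw [hFTC, sub_smul]
      have h4' := hgI.smul (Complex.exp (-lam * θ))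
      have h4 : IntervalIntegrable (fun u : ℝ => Complex.exp (-lam * θ) • g u) volume θ 0 := h4'
      rw [intervalIntegral.integral_congr (fun u _ => h3 u),
        intervalIntegral.integral_sub h4 hInt_eg,
        intervalIntegral.integral_smul, hG, hIdef]
    rw [expand, part1, part2]
  -- combine
  have hkey : (Complex.exp (-lam * θ) - 1) • d - Complex.exp (-lam * θ) • G = Z := by
    have hA' : A = I + Z := by rw [hI]; abel
    have h := hAeq.symm.trans hA'
    calc (Complex.exp (-lam * θ) - 1) • d - Complex.exp (-lam * θ) • G
        = ((Complex.exp (-lam * θ) - 1) • d - (Complex.exp (-lam * θ) • G - I)) - I := by abel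
      _ = (I + Z) - I := by rw [h]
      _ = Z := by abel
  rw [sub_smul, one_smul] at hkey
  have hsmul : Complex.exp (-lam * θ) • η θ = d + Z := by
    rw [hη θ ⟨hθr, hθ0⟩, smul_sub, ← hG]
    calc Complex.exp (-lam * θ) • d - Complex.exp (-lam * θ) • G
        = (Complex.exp (-lam * θ) • d - d - Complex.exp (-lam * θ) • G) + d := by abel
      _ = Z + d := by rw [hkey]
      _ = d + Z := by abel
  have hexp : Complex.exp (lam * θ) * Complex.exp (-lam * θ) = 1 := by
    rw [← Complex.exp_add]
    have : lam * θ + -lam * θ = 0 := by ring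
    rw [this, Complex.exp_zero]
  calc η θ = (Complex.exp (lam * θ) * Complex.exp (-lam * θ)) • η θ := by
        rw [hexp, one_smul]
    _ = Complex.exp (lam * θ) • (Complex.exp (-lam * θ) • η θ) := by rw [mul_smul]
    _ = Complex.exp (lam * θ) • (d + Z) := by rw [hsmul]
end

section
/- History-term estimate: let ν be a finite Borel measure on [−r,0], let η : [−r,0] → ℝⁿ be measurable and square-integrable, and let 0 ≤ t ≤ r. Then ∫₀^t ( ∫_{[−r,−s]} ‖η(s+θ)‖ dν(θ) ) ds ≤ √t · ‖η‖_{L²([−r,0];ℝⁿ)} · ν([−r,0]). -/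
open MeasureTheory Set

/-- history-term estimate.  Let `ν` be a finite Borel measure on `[-r,0]`,
let `η : [-r,0] → ℝⁿ` be measurable and square-integrable, and let `0 ≤ t ≤ r`.  Then
`∫₀^t ( ∫_{[-r,-s]} ‖η(s+θ)‖ dν(θ) ) ds ≤ √t · ‖η‖_{L²([-r,0];ℝⁿ)} · ν([-r,0])`,
where `‖·‖` is the Euclidean norm on `ℝⁿ`. -/
theorem statement9
    (r : ℝ) (hr : 0 < r) (n : ℕ)
    (ν : Measure ℝ) [IsFiniteMeasure ν]
    (η : ℝ → EuclideanSpace ℝ (Fin n))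
    (hη : Measurable η)
    (hη2 : IntegrableOn (fun s => ‖η s‖ ^ 2) (Icc (-r) 0))
    (t : ℝ) (ht0 : 0 ≤ t) (htr : t ≤ r) :
    ∫ s in (0:ℝ)..t, (∫ θ in Icc (-r) (-s), ‖η (s + θ)‖ ∂ν)
      ≤ Real.sqrt t * Real.sqrt (∫ s in Icc (-r) 0, ‖η s‖ ^ 2) *
          (ν (Icc (-r) 0)).toReal := by
  set μθ : Measure ℝ := ν.restrict (Icc (-r) 0) with hμθ
  set I2 : ℝ := ∫ s in Icc (-r) 0, ‖η s‖ ^ 2 with hI2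
  have hI2nn : 0 ≤ I2 := setIntegral_nonneg measurableSet_Icc fun x _ => sq_nonneg _
  set C : ENNReal := ENNReal.ofReal (Real.sqrt t) * ENNReal.ofReal (Real.sqrt I2) with hC
  set F : ℝ → ℝ → ENNReal := fun s θ => if s + θ ≤ 0 then (‖η (s + θ)‖₊ : ENNReal) else 0
    with hF
  -- measurability of the uncurried F
  have hFm : Measurable (Function.uncurry F) := by
    have h1 : Measurable fun p : ℝ × ℝ => (‖η (p.1 + p.2)‖₊ : ENNReal) :=
      (hη.comp (measurable_fst.add measurable_snd)).enorm
    have h2 : MeasurableSet {p : ℝ × ℝ | p.1 + p.2 ≤ 0} :=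
      measurableSet_le (measurable_fst.add measurable_snd) measurable_const
    exact Measurable.ite h2 h1 measurable_const
  -- square-integral in ENNReal form
  have hsq : ∫⁻ u in Icc (-r) 0, (‖η u‖₊ : ENNReal) ^ (2:ℝ) = ENNReal.ofReal I2 := by
    have heq : ∀ u : ℝ, (‖η u‖₊ : ENNReal) ^ (2:ℝ) = ENNReal.ofReal (‖η u‖ ^ 2) := by
      intro u
      rw [show (2:ℝ) = ((2:ℕ):ℝ) by norm_num, ENNReal.rpow_natCast,
        ← enorm_eq_nnnorm, ← ofReal_norm, ← ENNReal.ofReal_pow (norm_nonneg _)]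
    simp_rw [heq]
    rw [← ofReal_integral_eq_lintegral_ofReal hη2
      (Filter.Eventually.of_forall fun x => sq_nonneg _)]
  -- pointwise-in-θ bound after Fubini
  have hθbound : ∀ θ ∈ Icc (-r) 0, (∫⁻ s in Ioc 0 t, F s θ) ≤ C := by
    intro θ hθ
    have h1 : ∀ s : ℝ, F s θ = (Iic (-θ)).indicator (fun s => (‖η (s + θ)‖₊ : ENNReal)) s := by
      intro s
      by_cases h : s + θ ≤ 0
      · rw [indicator_of_mem (by simpa [mem_Iic] using by linarith : s ∈ Iic (-θ))]
        simp [hF, h]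
      · rw [indicator_of_notMem (by simp only [mem_Iic]; intro hc; exact h (by linarith))]
        simp [hF, h]
    have hfm : Measurable fun s => (‖η (s + θ)‖₊ : ENNReal) :=
      (hη.comp (measurable_id.add_const θ)).enorm
    calc ∫⁻ s in Ioc 0 t, F s θ
        = ∫⁻ s in Iic (-θ) ∩ Ioc 0 t, (‖η (s + θ)‖₊ : ENNReal) := by
          simp_rw [h1]
          rw [lintegral_indicator measurableSet_Iic,
            Measure.restrict_restrict measurableSet_Iic]
      _ ≤ (∫⁻ s in Iic (-θ) ∩ Ioc 0 t, (‖η (s + θ)‖₊ : ENNReal) ^ (2:ℝ)) ^ (1/(2:ℝ)) *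
            ((volume (Iic (-θ) ∩ Ioc 0 t)) : ENNReal) ^ (1/(2:ℝ)) := by
          have hH := ENNReal.lintegral_mul_le_Lp_mul_Lq
            (volume.restrict (Iic (-θ) ∩ Ioc 0 t)) (⟨by norm_num, by norm_num, by norm_num⟩ :
              Real.HolderConjugate 2 2) hfm.aemeasurable
            (aemeasurable_const (b := (1:ENNReal)))
          simpa [Measure.restrict_apply_univ] using hH
      _ ≤ (ENNReal.ofReal I2) ^ (1/(2:ℝ)) * (ENNReal.ofReal t) ^ (1/(2:ℝ)) := by
          gcongr
          · -- square integral bound via translation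
            calc ∫⁻ s in Iic (-θ) ∩ Ioc 0 t, (‖η (s + θ)‖₊ : ENNReal) ^ (2:ℝ)
                ≤ ∫⁻ s in Icc (-r - θ) (-θ), (‖η (s + θ)‖₊ : ENNReal) ^ (2:ℝ) := by
                  refine lintegral_mono_set fun s hs => ?_
                  have hs1 : s ≤ -θ := mem_Iic.mp hs.1
                  have hs2 : 0 < s := hs.2.1
                  have hθ1 : -r ≤ θ := hθ.1
                  exact mem_Icc.mpr ⟨by linarith, hs1⟩
              _ = ∫⁻ u in Icc (-r) 0, (‖η u‖₊ : ENNReal) ^ (2:ℝ) := by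
                  rw [← lintegral_indicator measurableSet_Icc,
                    ← lintegral_indicator measurableSet_Icc]
                  have : ∀ s : ℝ, (Icc (-r - θ) (-θ)).indicator
                      (fun s => (‖η (s + θ)‖₊ : ENNReal) ^ (2:ℝ)) s
                      = (Icc (-r) 0).indicator
                        (fun u => (‖η u‖₊ : ENNReal) ^ (2:ℝ)) (s + θ) := by
                    intro s
                    by_cases h : s ∈ Icc (-r - θ) (-θ)
                    · rw [indicator_of_mem h, indicator_of_mem]
                      obtain ⟨ha, hb⟩ := h
                      exact ⟨by linarith, by linarith⟩
                    · rw [indicator_of_notMem h, indicator_of_notMem]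
                      intro hc
                      exact h ⟨by linarith [hc.1], by linarith [hc.2]⟩
                  simp_rw [this]
                  exact MeasureTheory.lintegral_add_right_eq_self
                    (fun u => (Icc (-r) 0).indicator
                      (fun u => (‖η u‖₊ : ENNReal) ^ (2:ℝ)) u) θ
              _ = ENNReal.ofReal I2 := hsq
          · calc volume (Iic (-θ) ∩ Ioc 0 t) ≤ volume (Ioc 0 t) :=
                  measure_mono inter_subset_right
              _ = ENNReal.ofReal t := by rw [Real.volume_Ioc, sub_zero]
      _ = C := by
          rw [hC, ENNReal.ofReal_rpow_of_nonneg hI2nn (by norm_num),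
            ENNReal.ofReal_rpow_of_nonneg ht0 (by norm_num),
            ← Real.sqrt_eq_rpow, ← Real.sqrt_eq_rpow, mul_comm]
  -- main lintegral estimate
  have main : (∫⁻ s in Ioc 0 t, ∫⁻ θ, F s θ ∂μθ) ≤ C * ν (Icc (-r) 0) := by
    rw [lintegral_lintegral_swap (hFm.comp measurable_id).aemeasurable]
    calc ∫⁻ θ, (∫⁻ s in Ioc 0 t, F s θ) ∂μθ
        ≤ ∫⁻ _, C ∂μθ := by
          refine lintegral_mono_ae ?_
          filter_upwards [ae_restrict_mem measurableSet_Icc] with θ hθ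
          exact hθbound θ hθ
      _ = C * ν (Icc (-r) 0) := by
          rw [lintegral_const, hμθ, Measure.restrict_apply_univ]
  -- per-s bound on the inner Bochner integral
  have hsbound : ∀ s ∈ Ioc 0 t,
      ENNReal.ofReal (∫ θ in Icc (-r) (-s), ‖η (s + θ)‖ ∂ν) ≤ ∫⁻ θ, F s θ ∂μθ := by
    intro s hs
    have hset : Iic (-s) ∩ Icc (-r) 0 = Icc (-r) (-s) := by
      ext θ
      simp only [mem_inter_iff, mem_Iic, mem_Icc]
      constructor
      · rintro ⟨h1, h2, _⟩; exact ⟨h2, h1⟩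
      · rintro ⟨h1, h2⟩; exact ⟨h2, h1, by linarith [hs.1]⟩
    have h1 : ∀ θ : ℝ, F s θ = (Iic (-s)).indicator (fun θ => (‖η (s + θ)‖₊ : ENNReal)) θ := by
      intro θ
      by_cases h : s + θ ≤ 0
      · rw [indicator_of_mem (by simp only [mem_Iic]; linarith : θ ∈ Iic (-s))]
        simp [hF, h]
      · rw [indicator_of_notMem (by simp only [mem_Iic]; intro hc; exact h (by linarith))]
        simp [hF, h]
    have hrw : (∫⁻ θ, F s θ ∂μθ) = ∫⁻ θ in Icc (-r) (-s), (‖η (s + θ)‖₊ : ENNReal) ∂ν := by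
      simp_rw [h1]
      rw [lintegral_indicator measurableSet_Iic, hμθ,
        Measure.restrict_restrict measurableSet_Iic, hset]
    rw [hrw]
    by_cases hint : Integrable (fun θ => ‖η (s + θ)‖) (ν.restrict (Icc (-r) (-s)))
    · rw [ofReal_integral_eq_lintegral_ofReal hint
        (Filter.Eventually.of_forall fun θ => norm_nonneg _)]
      simp_rw [ofReal_norm]
      exact le_refl _
    · rw [integral_undef hint]
      simp
  -- finiteness of the bound
  have hfin : C * ν (Icc (-r) 0) ≠ ⊤ :=
    ENNReal.mul_ne_top (ENNReal.mul_ne_top ENNReal.ofReal_ne_top ENNReal.ofReal_ne_top)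
      (measure_ne_top ν _)
  -- final assembly
  rw [intervalIntegral.integral_of_le ht0]
  have hrhs : Real.sqrt t * Real.sqrt I2 * (ν (Icc (-r) 0)).toReal
      = (C * ν (Icc (-r) 0)).toReal := by
    rw [ENNReal.toReal_mul, hC, ENNReal.toReal_mul, ENNReal.toReal_ofReal (Real.sqrt_nonneg _),
      ENNReal.toReal_ofReal (Real.sqrt_nonneg _)]
  rw [hrhs]
  by_cases hint : IntegrableOn (fun s => ∫ θ in Icc (-r) (-s), ‖η (s + θ)‖ ∂ν) (Ioc 0 t)
  · rw [integral_eq_lintegral_of_nonneg_ae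
      (Filter.Eventually.of_forall fun s => integral_nonneg fun θ => norm_nonneg _)
      hint.aestronglyMeasurable]
    refine ENNReal.toReal_mono hfin ?_
    calc ∫⁻ s in Ioc 0 t, ENNReal.ofReal (∫ θ in Icc (-r) (-s), ‖η (s + θ)‖ ∂ν)
        ≤ ∫⁻ s in Ioc 0 t, ∫⁻ θ, F s θ ∂μθ := by
          refine lintegral_mono_ae ?_
          filter_upwards [ae_restrict_mem measurableSet_Ioc] with s hs
          exact hsbound s hs
      _ ≤ C * ν (Icc (-r) 0) := main
  · rw [integral_undef hint]
    exact ENNReal.toReal_nonneg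
end

section
/- Miyadera–Voigt-type estimate for the delay operator: for every d ∈ ℝⁿ, every measurable square-integrable η : [−r,0] → ℝⁿ, and every 0 ≤ t ≤ r, ∫₀^t ‖Φ( T_s d + T₀(s)η )‖ ds ≤ ( √t · ‖η‖_{L²([−r,0];ℝⁿ)} + t · K · ‖d‖ ) · |μ|, where Φ is applied to the function θ ↦ (T_s d)(θ) + (T₀(s)η)(θ). -/
open MeasureTheory Set
open scoped ENNReal NNReal

/-- The delay operator `Φ(ξ) := ∫_{[-r,0]} ξ dμ⁺ - ∫_{[-r,0]} ξ dμ⁻`, where `(μ⁺, μ⁻)` is the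
Jordan decomposition of a Borel measure `μ` of bounded variation on `[-r,0]`. -/
noncomputable def delayPhi {n : ℕ} (r : ℝ) (μp μm : Measure ℝ)
    (ξ : ℝ → EuclideanSpace ℝ (Fin n)) : EuclideanSpace ℝ (Fin n) :=
  (∫ θ in Icc (-r) 0, ξ θ ∂μp) - ∫ θ in Icc (-r) 0, ξ θ ∂μm

lemma expB_eq {n : ℕ} (b : Fin n → ℝ) (s : ℝ) :
    expB b s = Matrix.toEuclideanCLM (𝕜 := ℝ)
      (Matrix.diagonal (fun i => Real.exp (s * b i))) := by
  unfold expB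
  rw [← Matrix.diagonal_smul, Matrix.exp_diagonal]
  congr 1
  funext i
  rw [Pi.exp_def]
  simp [← Real.exp_eq_exp_ℝ]

lemma expB_continuous {n : ℕ} (b : Fin n → ℝ) : Continuous fun s => expB b s := by
  have h1 : Continuous fun s : ℝ => (fun i => Real.exp (s * b i) : Fin n → ℝ) :=
    continuous_pi fun i => Real.continuous_exp.comp (continuous_id.mul continuous_const)
  have h2 : Continuous fun v : Fin n → ℝ =>
      Matrix.toEuclideanCLM (𝕜 := ℝ) (Matrix.diagonal v) := by
    let L : (Fin n → ℝ) →ₗ[ℝ] (EuclideanSpace ℝ (Fin n) →L[ℝ] EuclideanSpace ℝ (Fin n)) :=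
      { toFun := fun v => Matrix.toEuclideanCLM (𝕜 := ℝ) (Matrix.diagonal v)
        map_add' := by
          intro x y
          have h : Matrix.diagonal (x + y) = Matrix.diagonal x + Matrix.diagonal y :=
            (Matrix.diagonal_add x y).symm
          simp only [h, map_add]
        map_smul' := by
          intro c x
          simp only [Matrix.diagonal_smul, _root_.map_smul, RingHom.id_apply] }
    exact L.continuous_of_finiteDimensional
  have := h2.comp h1
  simpa [expB_eq, Function.comp_def] using this

lemma sq_ofReal (a : ℝ) (ha : 0 ≤ a) :
    (ENNReal.ofReal a) ^ (2:ℝ) = ENNReal.ofReal (a ^ 2) := by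
  rw [ENNReal.ofReal_rpow_of_nonneg ha (by norm_num),
    show ((2:ℝ)) = ((2:ℕ):ℝ) by norm_num, Real.rpow_natCast]

lemma half_ofReal (a : ℝ) (ha : 0 ≤ a) :
    (ENNReal.ofReal a) ^ (1/2 : ℝ) = ENNReal.ofReal (Real.sqrt a) := by
  rw [ENNReal.ofReal_rpow_of_nonneg ha (by norm_num), Real.sqrt_eq_rpow]

lemma inner_CS {n : ℕ} (r t : ℝ) (ht0 : 0 ≤ t)
    (η : ℝ → EuclideanSpace ℝ (Fin n)) (hη : Measurable η)
    (hη2 : IntegrableOn (fun s => ‖η s‖ ^ 2) (Icc (-r) 0))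
    (θ : ℝ) (hθ : θ ∈ Icc (-r) 0) :
    ∫⁻ s in Ioc (0:ℝ) t, ENNReal.ofReal ‖shiftT0 s η θ‖
      ≤ ENNReal.ofReal (Real.sqrt t * Real.sqrt (∫ u in Icc (-r) 0, ‖η u‖ ^ 2)) := by
  set X : ℝ := ∫ u in Icc (-r) 0, ‖η u‖ ^ 2 with hX
  have hX0 : 0 ≤ X := integral_nonneg fun u => sq_nonneg _
  set f : ℝ → ℝ≥0∞ := fun s => ENNReal.ofReal ‖shiftT0 s η θ‖ with hf_def
  have hmes : Measurable f := by
    apply Measurable.ennreal_ofReal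
    apply Measurable.norm
    unfold shiftT0
    exact Measurable.ite (measurableSet_le (measurable_id.add_const θ) measurable_const)
      (hη.comp (measurable_id.add_const θ)) measurable_const
  set G : ℝ → ℝ≥0∞ := (Icc (-r) 0).indicator (fun u => ENNReal.ofReal (‖η u‖ ^ 2)) with hG
  have key : ∀ s ∈ Ioc (0:ℝ) t, f s ^ (2:ℝ) ≤ G (s + θ) := by
    intro s hs
    simp only [hf_def, shiftT0, hG]
    by_cases h : s + θ ≤ 0
    · rw [if_pos h, sq_ofReal _ (norm_nonneg _),
        indicator_of_mem (show s + θ ∈ Icc (-r) 0 from ⟨by nlinarith [hθ.1, hs.1], h⟩)]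
    · rw [if_neg h]
      simp [ENNReal.zero_rpow_of_pos (by norm_num : (0:ℝ) < 2)]
  have hsq : ∫⁻ s in Ioc (0:ℝ) t, f s ^ (2:ℝ) ≤ ENNReal.ofReal X := by
    calc ∫⁻ s in Ioc (0:ℝ) t, f s ^ (2:ℝ)
        ≤ ∫⁻ s in Ioc (0:ℝ) t, G (s + θ) := setLIntegral_mono' measurableSet_Ioc key
      _ ≤ ∫⁻ s, G (s + θ) := setLIntegral_le_lintegral _ _
      _ = ∫⁻ u, G u := lintegral_add_right_eq_self G θ
      _ = ∫⁻ u in Icc (-r) 0, ENNReal.ofReal (‖η u‖ ^ 2) :=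
          (lintegral_indicator measurableSet_Icc _)
      _ = ENNReal.ofReal X := by
          rw [hX, ← ofReal_integral_eq_lintegral_ofReal hη2
            (ae_of_all _ fun u => sq_nonneg _)]
  have hCS := ENNReal.lintegral_mul_le_Lp_mul_Lq (volume.restrict (Ioc (0:ℝ) t))
    Real.HolderConjugate.two_two hmes.aemeasurable
    (aemeasurable_const (b := (1:ℝ≥0∞)))
  simp only [Pi.mul_apply, mul_one, ENNReal.one_rpow, lintegral_const,
    Measure.restrict_apply_univ, Real.volume_Ioc, sub_zero, lintegral_one, one_mul] at hCS
  calc ∫⁻ s in Ioc (0:ℝ) t, f s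
      ≤ (∫⁻ s in Ioc (0:ℝ) t, f s ^ (2:ℝ)) ^ (1/2:ℝ) * (ENNReal.ofReal t) ^ (1/2:ℝ) := hCS
    _ ≤ (ENNReal.ofReal X) ^ (1/2:ℝ) * (ENNReal.ofReal t) ^ (1/2:ℝ) := by gcongr
    _ = ENNReal.ofReal (Real.sqrt t * Real.sqrt X) := by
        rw [half_ofReal _ hX0, half_ofReal _ ht0, ← ENNReal.ofReal_mul (Real.sqrt_nonneg _),
          mul_comm]

lemma K_bounds {n : ℕ} (r : ℝ) (hr : 0 < r) (b : Fin n → ℝ) :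
    0 ≤ (⨆ s ∈ Icc (0:ℝ) r, ‖expB b s‖) ∧
      ∀ u ∈ Icc (0:ℝ) r, ‖expB b u‖ ≤ ⨆ s ∈ Icc (0:ℝ) r, ‖expB b s‖ := by
  have hbdd : BddAbove ((fun s => ‖expB b s‖) '' Icc (0:ℝ) r) :=
    (isCompact_Icc.image (continuous_norm.comp (expB_continuous b))).bddAbove
  have hbdd' : BddAbove (Set.range fun i : Icc (0:ℝ) r => ‖expB b (i:ℝ)‖) := by
    rw [Set.image_eq_range] at hbdd; exact hbdd
  have h0 : (0:ℝ) ∈ Icc (0:ℝ) r := ⟨le_rfl, hr.le⟩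
  have hne : (0:ℝ) ≤ ⨆ i : Icc (0:ℝ) r, ‖expB b (i:ℝ)‖ :=
    le_trans (norm_nonneg (expB b 0)) (le_ciSup hbdd' ⟨0, h0⟩)
  have himg := csSup_image (s := Icc (0:ℝ) r) (f := fun s => ‖expB b s‖)
      hbdd' (by rw [Real.sSup_empty]; exact hne)
  refine ⟨?_, fun u hu => ?_⟩
  · rw [← himg]
    exact le_trans (norm_nonneg (expB b 0)) (le_csSup hbdd (mem_image_of_mem _ h0))
  · rw [← himg]
    exact le_csSup hbdd (mem_image_of_mem _ hu)

lemma shift_uncurry_meas {n : ℕ} (η : ℝ → EuclideanSpace ℝ (Fin n)) (hη : Measurable η) :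
    Measurable fun p : ℝ × ℝ => shiftT0 p.1 η p.2 := by
  unfold shiftT0
  exact Measurable.ite (measurableSet_le (measurable_fst.add measurable_snd) measurable_const)
    (hη.comp (measurable_fst.add measurable_snd)) measurable_const

lemma delay_uncurry_meas {n : ℕ} (b : Fin n → ℝ) (d : EuclideanSpace ℝ (Fin n)) :
    Measurable fun p : ℝ × ℝ => delayT b p.1 d p.2 := by
  unfold delayT
  refine Measurable.ite (measurableSet_lt measurable_fst.neg measurable_snd) ?_ measurable_const
  have : Continuous fun u : ℝ => expB b u d := (expB_continuous b).clm_apply continuous_const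
  exact (this.comp (continuous_fst.add continuous_snd)).measurable

lemma per_measure {n : ℕ} (r : ℝ) (hr : 0 < r) (b : Fin n → ℝ)
    (κ : Measure ℝ) [IsFiniteMeasure κ]
    (d : EuclideanSpace ℝ (Fin n)) (η : ℝ → EuclideanSpace ℝ (Fin n)) (hη : Measurable η)
    (hη2 : IntegrableOn (fun s => ‖η s‖ ^ 2) (Icc (-r) 0))
    (t : ℝ) (ht0 : 0 ≤ t) (htr : t ≤ r) :
    ∫⁻ s in Ioc (0:ℝ) t, ∫⁻ θ in Icc (-r) 0,
        ENNReal.ofReal ‖delayT b s d θ + shiftT0 s η θ‖ ∂κ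
      ≤ ENNReal.ofReal (Real.sqrt t * Real.sqrt (∫ u in Icc (-r) 0, ‖η u‖ ^ 2)
          + t * (⨆ s ∈ Icc (0:ℝ) r, ‖expB b s‖) * ‖d‖) * κ (Icc (-r) 0) := by
  obtain ⟨hK0, hK⟩ := K_bounds r hr b
  set K := ⨆ s ∈ Icc (0:ℝ) r, ‖expB b s‖ with hKdef
  set X : ℝ := ∫ u in Icc (-r) 0, ‖η u‖ ^ 2 with hX
  have hX0 : 0 ≤ X := integral_nonneg fun u => sq_nonneg _
  -- pointwise bound
  have hdelay : ∀ s ∈ Ioc (0:ℝ) t, ∀ θ ∈ Icc (-r) 0, ‖delayT b s d θ‖ ≤ K * ‖d‖ := by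
    intro s hs θ hθ
    unfold delayT
    split_ifs with h
    · refine le_trans ((expB b (s + θ)).le_opNorm d) ?_
      refine mul_le_mul_of_nonneg_right (hK _ ⟨?_, ?_⟩) (norm_nonneg d)
      · linarith [hs.1]
      · linarith [hθ.2, hs.2, htr]
    · simpa using mul_nonneg hK0 (norm_nonneg d)
  have hpt : ∀ s ∈ Ioc (0:ℝ) t, ∀ θ ∈ Icc (-r) 0,
      ENNReal.ofReal ‖delayT b s d θ + shiftT0 s η θ‖
        ≤ ENNReal.ofReal (K * ‖d‖) + ENNReal.ofReal ‖shiftT0 s η θ‖ := by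
    intro s hs θ hθ
    refine le_trans (ENNReal.ofReal_le_ofReal ?_) ENNReal.ofReal_add_le
    exact (norm_add_le _ _).trans (add_le_add_left (hdelay s hs θ hθ) _)
  have hinner : ∀ s ∈ Ioc (0:ℝ) t,
      (∫⁻ θ in Icc (-r) 0, ENNReal.ofReal ‖delayT b s d θ + shiftT0 s η θ‖ ∂κ)
        ≤ ENNReal.ofReal (K * ‖d‖) * κ (Icc (-r) 0) + ∫⁻ θ in Icc (-r) 0, ENNReal.ofReal ‖shiftT0 s η θ‖ ∂κ := by
    intro s hs
    calc (∫⁻ θ in Icc (-r) 0, ENNReal.ofReal ‖delayT b s d θ + shiftT0 s η θ‖ ∂κ)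
        ≤ ∫⁻ θ in Icc (-r) 0, (ENNReal.ofReal (K * ‖d‖) + ENNReal.ofReal ‖shiftT0 s η θ‖) ∂κ :=
          setLIntegral_mono' measurableSet_Icc (hpt s hs)
      _ = ENNReal.ofReal (K * ‖d‖) * κ (Icc (-r) 0)
            + ∫⁻ θ in Icc (-r) 0, ENNReal.ofReal ‖shiftT0 s η θ‖ ∂κ := by
          rw [lintegral_add_left measurable_const, lintegral_const,
            Measure.restrict_apply_univ]
  have hswap :
      (∫⁻ s in Ioc (0:ℝ) t, ∫⁻ θ in Icc (-r) 0, ENNReal.ofReal ‖shiftT0 s η θ‖ ∂κ)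
        = ∫⁻ θ in Icc (-r) 0, (∫⁻ s in Ioc (0:ℝ) t, ENNReal.ofReal ‖shiftT0 s η θ‖) ∂κ := by
    refine lintegral_lintegral_swap (μ := volume.restrict (Ioc (0:ℝ) t))
      (ν := κ.restrict (Icc (-r) 0))
      (f := fun s θ => ENNReal.ofReal ‖shiftT0 s η θ‖) ?_
    exact ((shift_uncurry_meas η hη).norm.ennreal_ofReal).aemeasurable
  calc (∫⁻ s in Ioc (0:ℝ) t, ∫⁻ θ in Icc (-r) 0, ENNReal.ofReal ‖delayT b s d θ + shiftT0 s η θ‖ ∂κ)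
      ≤ ∫⁻ s in Ioc (0:ℝ) t, (ENNReal.ofReal (K * ‖d‖) * κ (Icc (-r) 0)
          + ∫⁻ θ in Icc (-r) 0, ENNReal.ofReal ‖shiftT0 s η θ‖ ∂κ) :=
        setLIntegral_mono' measurableSet_Ioc hinner
    _ = ENNReal.ofReal (K * ‖d‖) * κ (Icc (-r) 0) * ENNReal.ofReal t
          + ∫⁻ s in Ioc (0:ℝ) t, ∫⁻ θ in Icc (-r) 0, ENNReal.ofReal ‖shiftT0 s η θ‖ ∂κ := by
        rw [lintegral_add_left measurable_const, lintegral_const,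
          Measure.restrict_apply_univ, Real.volume_Ioc, sub_zero]
    _ = ENNReal.ofReal (K * ‖d‖) * κ (Icc (-r) 0) * ENNReal.ofReal t
          + ∫⁻ θ in Icc (-r) 0, (∫⁻ s in Ioc (0:ℝ) t, ENNReal.ofReal ‖shiftT0 s η θ‖) ∂κ := by
        rw [hswap]
    _ ≤ ENNReal.ofReal (K * ‖d‖) * κ (Icc (-r) 0) * ENNReal.ofReal t
          + ∫⁻ θ in Icc (-r) 0, ENNReal.ofReal (Real.sqrt t * Real.sqrt X) ∂κ := by
        refine add_le_add_right ?_ _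
        refine setLIntegral_mono' measurableSet_Icc fun θ hθ => ?_
        exact inner_CS r t ht0 η hη hη2 θ hθ
    _ = ENNReal.ofReal (Real.sqrt t * Real.sqrt X + t * K * ‖d‖) * κ (Icc (-r) 0) := by
        rw [lintegral_const, Measure.restrict_apply_univ,
          ENNReal.ofReal_add (mul_nonneg (Real.sqrt_nonneg _) (Real.sqrt_nonneg _))
            (mul_nonneg (mul_nonneg ht0 hK0) (norm_nonneg d)),
          add_mul, mul_right_comm, ← ENNReal.ofReal_mul (mul_nonneg hK0 (norm_nonneg d)),
          show K * ‖d‖ * t = t * K * ‖d‖ by ring, add_comm]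


/-- Miyadera–Voigt-type estimate for the delay operator.  For every
`d ∈ ℝⁿ`, every measurable square-integrable `η : [-r,0] → ℝⁿ` and every `0 ≤ t ≤ r`,
`∫₀^t ‖Φ(T_s d + T₀(s)η)‖ ds ≤ (√t ‖η‖_{L²} + t K ‖d‖) |μ|`, where
`K := sup_{s∈[0,r]} ‖e^{sB}‖` and `|μ| := μ⁺([-r,0]) + μ⁻([-r,0])`. -/
theorem statement11
    (r : ℝ) (hr : 0 < r) (n : ℕ) (b : Fin n → ℝ)
    (μp μm : Measure ℝ) [IsFiniteMeasure μp] [IsFiniteMeasure μm]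
    (d : EuclideanSpace ℝ (Fin n)) (η : ℝ → EuclideanSpace ℝ (Fin n))
    (hη : Measurable η)
    (hη2 : IntegrableOn (fun s => ‖η s‖ ^ 2) (Icc (-r) 0))
    (t : ℝ) (ht0 : 0 ≤ t) (htr : t ≤ r) :
    ∫ s in (0:ℝ)..t, ‖delayPhi r μp μm (fun θ => delayT b s d θ + shiftT0 s η θ)‖
      ≤ (Real.sqrt t * Real.sqrt (∫ s in Icc (-r) 0, ‖η s‖ ^ 2)
            + t * (⨆ s ∈ Icc (0:ℝ) r, ‖expB b s‖) * ‖d‖)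
          * ((μp (Icc (-r) 0)).toReal + (μm (Icc (-r) 0)).toReal) := by
  obtain ⟨hK0, hK⟩ := K_bounds r hr b
  set K := ⨆ s ∈ Icc (0:ℝ) r, ‖expB b s‖ with hKdef
  set X : ℝ := ∫ u in Icc (-r) 0, ‖η u‖ ^ 2 with hX
  have hX0 : 0 ≤ X := integral_nonneg fun u => sq_nonneg _
  set C : ℝ := Real.sqrt t * Real.sqrt X + t * K * ‖d‖ with hC
  have hC0 : 0 ≤ C :=
    add_nonneg (mul_nonneg (Real.sqrt_nonneg _) (Real.sqrt_nonneg _))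
      (mul_nonneg (mul_nonneg ht0 hK0) (norm_nonneg d))
  have hjoint : Measurable fun p : ℝ × ℝ => delayT b p.1 d p.2 + shiftT0 p.1 η p.2 :=
    (delay_uncurry_meas b d).add (shift_uncurry_meas η hη)
  have hF : AEStronglyMeasurable
      (fun s => ‖delayPhi r μp μm (fun θ => delayT b s d θ + shiftT0 s η θ)‖)
      (volume.restrict (Ioc (0:ℝ) t)) := by
    refine (StronglyMeasurable.norm ?_).aestronglyMeasurable
    unfold delayPhi
    exact (hjoint.stronglyMeasurable.integral_prod_right' (ν := μp.restrict (Icc (-r) 0))).sub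
      (hjoint.stronglyMeasurable.integral_prod_right' (ν := μm.restrict (Icc (-r) 0)))
  have hΦ : ∀ s : ℝ,
      ENNReal.ofReal ‖delayPhi r μp μm (fun θ => delayT b s d θ + shiftT0 s η θ)‖
        ≤ (∫⁻ θ in Icc (-r) 0, ENNReal.ofReal ‖delayT b s d θ + shiftT0 s η θ‖ ∂μp)
          + ∫⁻ θ in Icc (-r) 0, ENNReal.ofReal ‖delayT b s d θ + shiftT0 s η θ‖ ∂μm := by
    intro s
    have h1 := enorm_integral_le_lintegral_enorm (μ := μp.restrict (Icc (-r) 0))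
      (fun θ => delayT b s d θ + shiftT0 s η θ)
    have h2 := enorm_integral_le_lintegral_enorm (μ := μm.restrict (Icc (-r) 0))
      (fun θ => delayT b s d θ + shiftT0 s η θ)
    simp only [← ofReal_norm] at h1 h2
    unfold delayPhi
    calc ENNReal.ofReal ‖(∫ θ in Icc (-r) 0, (delayT b s d θ + shiftT0 s η θ) ∂μp)
            - ∫ θ in Icc (-r) 0, (delayT b s d θ + shiftT0 s η θ) ∂μm‖
        ≤ ENNReal.ofReal (‖∫ θ in Icc (-r) 0, (delayT b s d θ + shiftT0 s η θ) ∂μp‖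
            + ‖∫ θ in Icc (-r) 0, (delayT b s d θ + shiftT0 s η θ) ∂μm‖) :=
          ENNReal.ofReal_le_ofReal (norm_sub_le _ _)
      _ ≤ ENNReal.ofReal ‖∫ θ in Icc (-r) 0, (delayT b s d θ + shiftT0 s η θ) ∂μp‖
            + ENNReal.ofReal ‖∫ θ in Icc (-r) 0, (delayT b s d θ + shiftT0 s η θ) ∂μm‖ :=
          ENNReal.ofReal_add_le
      _ ≤ _ := add_le_add h1 h2
  have hmeasp : Measurable fun s : ℝ =>
      ∫⁻ θ in Icc (-r) 0, ENNReal.ofReal ‖delayT b s d θ + shiftT0 s η θ‖ ∂μp :=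
    Measurable.lintegral_prod_right' (ν := μp.restrict (Icc (-r) 0))
      (hjoint.norm.ennreal_ofReal)
  have hmain : (∫⁻ s in Ioc (0:ℝ) t,
        ENNReal.ofReal ‖delayPhi r μp μm (fun θ => delayT b s d θ + shiftT0 s η θ)‖)
      ≤ ENNReal.ofReal C * (μp (Icc (-r) 0) + μm (Icc (-r) 0)) := by
    calc (∫⁻ s in Ioc (0:ℝ) t,
          ENNReal.ofReal ‖delayPhi r μp μm (fun θ => delayT b s d θ + shiftT0 s η θ)‖)
        ≤ ∫⁻ s in Ioc (0:ℝ) t,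
            ((∫⁻ θ in Icc (-r) 0, ENNReal.ofReal ‖delayT b s d θ + shiftT0 s η θ‖ ∂μp)
              + ∫⁻ θ in Icc (-r) 0, ENNReal.ofReal ‖delayT b s d θ + shiftT0 s η θ‖ ∂μm) :=
          lintegral_mono fun s => hΦ s
      _ = (∫⁻ s in Ioc (0:ℝ) t,
            ∫⁻ θ in Icc (-r) 0, ENNReal.ofReal ‖delayT b s d θ + shiftT0 s η θ‖ ∂μp)
          + ∫⁻ s in Ioc (0:ℝ) t,
            ∫⁻ θ in Icc (-r) 0, ENNReal.ofReal ‖delayT b s d θ + shiftT0 s η θ‖ ∂μm :=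
          lintegral_add_left hmeasp _
      _ ≤ ENNReal.ofReal C * μp (Icc (-r) 0) + ENNReal.ofReal C * μm (Icc (-r) 0) :=
          add_le_add (per_measure r hr b μp d η hη hη2 t ht0 htr)
            (per_measure r hr b μm d η hη hη2 t ht0 htr)
      _ = ENNReal.ofReal C * (μp (Icc (-r) 0) + μm (Icc (-r) 0)) := (mul_add _ _ _).symm
  have heq : ENNReal.ofReal C * (μp (Icc (-r) 0) + μm (Icc (-r) 0))
      = ENNReal.ofReal (C * ((μp (Icc (-r) 0)).toReal + (μm (Icc (-r) 0)).toReal)) := by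
    rw [ENNReal.ofReal_mul hC0, ENNReal.ofReal_add ENNReal.toReal_nonneg ENNReal.toReal_nonneg,
      ENNReal.ofReal_toReal (measure_ne_top _ _), ENNReal.ofReal_toReal (measure_ne_top _ _)]
  have hRHS0 : 0 ≤ C * ((μp (Icc (-r) 0)).toReal + (μm (Icc (-r) 0)).toReal) :=
    mul_nonneg hC0 (add_nonneg ENNReal.toReal_nonneg ENNReal.toReal_nonneg)
  rw [intervalIntegral.integral_of_le ht0,
    integral_eq_lintegral_of_nonneg_ae (ae_of_all _ fun s => norm_nonneg _) hF]
  calc (∫⁻ s in Ioc (0:ℝ) t,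
        ENNReal.ofReal ‖delayPhi r μp μm (fun θ => delayT b s d θ + shiftT0 s η θ)‖).toReal
      ≤ (ENNReal.ofReal (C * ((μp (Icc (-r) 0)).toReal + (μm (Icc (-r) 0)).toReal))).toReal :=
        ENNReal.toReal_mono ENNReal.ofReal_ne_top (heq ▸ hmain)
    _ = C * ((μp (Icc (-r) 0)).toReal + (μm (Icc (-r) 0)).toReal) :=
        ENNReal.toReal_ofReal hRHS0
end
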